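/- Minimal-distance realization via H: Let M be a Kripke model with states v, w and α a program with (v,w) ∈ R_α. Then there exists a pair (X, δ̄) ∈ H_α such that M, v ⊨ ⋀X and d_{δ̄}(v,w) = d_α(v,w), where d_{δ̄} is the distance along the program list δ̄ (d_ε(v,w) = 0 if v=w else ∞; d_{αγ̄}(v,w) = min over u of d_α(v,u) + d_{γ̄}(u,w)). -/
import Mathlib


mutual
inductive Formula : Type
  | bot : Formula
  | atom : ℕ → Formula
  | and : Formula → Formula → Formula
  | neg : Formula → Formula
  | box : Program → Formula → Formula
inductive Program : Type
  | atom : ℕ → Program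
  | test : Formula → Program
  | union : Program → Program → Program
  | comp : Program → Program → Program
  | star : Program → Program
end

structure KripkeModel (W : Type) : Type where
  rel : ℕ → W → W → Prop
  val : W → ℕ → Prop

mutual
def evaluate {W : Type} (M : KripkeModel W) : W → Formula → Prop
  | _, .bot => False
  | w, .atom p => M.val w p
  | w, .and φ ψ => evaluate M w φ ∧ evaluate M w ψ
  | w, .neg φ => ¬ evaluate M w φ
  | w, .box α φ => ∀ v, relate M α w v → evaluate M v φ
def relate {W : Type} (M : KripkeModel W) : Program → W → W → Prop
  | .atom a, w, v => M.rel a w v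
  | .test τ, w, v => w = v ∧ evaluate M w τ
  | .union α β, w, v => relate M α w v ∨ relate M β w v
  | .comp α β, w, v => ∃ u, relate M α w u ∧ relate M β u v
  | .star α, w, v => Relation.ReflTransGen (fun x y => relate M α x y) w v
end

/-- Relation interpreting a list of programs: composition, identity for `[]`. -/
def relateSeq {W : Type} (M : KripkeModel W) : List Program → W → W → Prop
  | [], v, w => v = w
  | α :: δ, v, w => ∃ u, relate M α v u ∧ relateSeq M δ u w

/-- Implication, defined from ¬ and ∧. -/
def Formula.imp (φ ψ : Formula) : Formula := .neg (.and φ (.neg ψ))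

/-- Disjunction, defined from ¬ and ∧. -/
def Formula.disj (φ ψ : Formula) : Formula := .neg (.and (.neg φ) (.neg ψ))

def semImplies (φ ψ : Formula) : Prop :=
  ∀ (W : Type) (M : KripkeModel W) (w : W), evaluate M w φ → evaluate M w ψ

def semEquiv (φ ψ : Formula) : Prop :=
  ∀ (W : Type) (M : KripkeModel W) (w : W), evaluate M w φ ↔ evaluate M w ψ

def valid (φ : Formula) : Prop :=
  ∀ (W : Type) (M : KripkeModel W) (w : W), evaluate M w φ

mutual
/-- Uniform substitution on formulas. -/
def substF (σ : ℕ → Formula) : Formula → Formula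
  | .bot => .bot
  | .atom p => σ p
  | .and φ ψ => .and (substF σ φ) (substF σ ψ)
  | .neg φ => .neg (substF σ φ)
  | .box α φ => .box (substP σ α) (substF σ φ)
/-- Uniform substitution on programs. -/
def substP (σ : ℕ → Formula) : Program → Program
  | .atom a => .atom a
  | .test τ => .test (substF σ τ)
  | .union α β => .union (substP σ α) (substP σ β)
  | .comp α β => .comp (substP σ α) (substP σ β)
  | .star α => .star (substP σ α)
end

/-- The substitution ρ/x mapping x to ρ and all other atoms to themselves. -/
def substOne (x : ℕ) (ρ : Formula) : ℕ → Formula := fun p => if p = x then ρ else .atom p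

mutual
/-- Occurrence of an atomic proposition in a formula. -/
def occursF (x : ℕ) : Formula → Prop
  | .bot => False
  | .atom p => p = x
  | .and φ ψ => occursF x φ ∨ occursF x ψ
  | .neg φ => occursF x φ
  | .box α φ => occursP x α ∨ occursF x φ
/-- Occurrence of an atomic proposition in a program (including inside tests). -/
def occursP (x : ℕ) : Program → Prop
  | .atom _ => False
  | .test τ => occursF x τ
  | .union α β => occursP x α ∨ occursP x β
  | .comp α β => occursP x α ∨ occursP x β
  | .star α => occursP x α
end

mutual
/-- Vocabulary of a formula: atomic propositions (inl) and atomic programs (inr). -/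
def vocF : Formula → Set (ℕ ⊕ ℕ)
  | .bot => ∅
  | .atom p => {Sum.inl p}
  | .and φ ψ => vocF φ ∪ vocF ψ
  | .neg φ => vocF φ
  | .box α φ => vocP α ∪ vocF φ
def vocP : Program → Set (ℕ ⊕ ℕ)
  | .atom a => {Sum.inr a}
  | .test τ => vocF τ
  | .union α β => vocP α ∪ vocP β
  | .comp α β => vocP α ∪ vocP β
  | .star α => vocP α
end

/-- Shallow tests of a program. -/
def TestsOf : Program → Set Formula
  | .atom _ => ∅
  | .test τ => {τ}
  | .union α β => TestsOf α ∪ TestsOf β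
  | .comp α β => TestsOf α ∪ TestsOf β
  | .star α => TestsOf α

/-- Shallow subprograms of a program. -/
def ProgsOf : Program → Set Program
  | .atom a => {.atom a}
  | .test τ => {.test τ}
  | .union α β => {.union α β} ∪ ProgsOf α ∪ ProgsOf β
  | .comp α β => {.comp α β} ∪ ProgsOf α ∪ ProgsOf β
  | .star α => {.star α} ∪ ProgsOf α

/-- Iterated boxes: □(δ̄, φ) = [δ₁]…[δₙ]φ. -/
def boxes : List Program → Formula → Formula
  | [], φ => φ
  | α :: δ, φ => .box α (boxes δ φ)

/-- Test profiles of a program: subsets of its shallow tests. -/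
def TP (α : Program) : Set (Set Formula) := {ℓ | ℓ ⊆ TestsOf α}

/-- The sets of program lists P^ℓ. -/
def Pfun (ℓ : Set Formula) : Program → Set (List Program)
  | .atom a => {[.atom a]}
  | .test τ => {l | l = [] ∧ τ ∈ ℓ}
  | .union α β => Pfun ℓ α ∪ Pfun ℓ β
  | .comp α β => {l | ∃ δ ∈ Pfun ℓ α, δ ≠ [] ∧ l = δ ++ [β]} ∪ {l | l ∈ Pfun ℓ β ∧ [] ∈ Pfun ℓ α}
  | .star α => {[]} ∪ {l | ∃ δ ∈ Pfun ℓ α, δ ≠ [] ∧ l = δ ++ [.star α]}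

/-- F^ℓ(α): negations of the failed tests. -/
def Ffun (ℓ : Set Formula) (α : Program) : Set Formula :=
  {φ | ∃ τ, τ ∈ TestsOf α ∧ τ ∉ ℓ ∧ φ = Formula.neg τ}

/-- X^ℓ_{α,ψ}. -/
def Xset (ℓ : Set Formula) (α : Program) (ψ : Formula) : Set Formula :=
  Ffun ℓ α ∪ {φ | ∃ δ ∈ Pfun ℓ α, φ = boxes δ ψ}

/-- unfold_□(α, ψ). -/
def unfoldBox (α : Program) (ψ : Formula) : Set (Set Formula) :=
  {Γ | ∃ ℓ ∈ TP α, Γ = Xset ℓ α ψ}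

/-- The function H for diamond unfolding. -/
def Hfun : Program → Set (Set Formula × List Program)
  | .atom a => {(∅, [.atom a])}
  | .test τ => {({τ}, [])}
  | .union α β => Hfun α ∪ Hfun β
  | .comp α β =>
      {p | (∃ X δ, (X, δ) ∈ Hfun α ∧ δ ≠ [] ∧ p = (X, δ ++ [β])) ∨
           (∃ X Y δ, (X, ([] : List Program)) ∈ Hfun α ∧ (Y, δ) ∈ Hfun β ∧ p = (X ∪ Y, δ))}
  | .star α =>
      insert (∅, ([] : List Program))
        {p | ∃ X δ, (X, δ) ∈ Hfun α ∧ δ ≠ [] ∧ p = (X, δ ++ [Program.star α])}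

/-- unfold_◇(α, ψ). -/
def unfoldDiamond (α : Program) (ψ : Formula) : Set (Set Formula) :=
  {Γ | ∃ p ∈ Hfun α, Γ = p.1 ∪ {Formula.neg (boxes p.2 ψ)}}

/-- Saturated sets of formulas. -/
def Saturated (Y : Set Formula) : Prop :=
  (∀ φ, Formula.neg (.neg φ) ∈ Y → φ ∈ Y) ∧
  (∀ φ ψ, Formula.and φ ψ ∈ Y → φ ∈ Y ∧ ψ ∈ Y) ∧
  (∀ φ ψ, Formula.neg (.and φ ψ) ∈ Y → Formula.neg φ ∈ Y ∨ Formula.neg ψ ∈ Y) ∧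
  (∀ α φ, Formula.box α φ ∈ Y → ∃ Δ ∈ unfoldBox α φ, Δ ⊆ Y) ∧
  (∀ α φ, Formula.neg (.box α φ) ∈ Y → ∃ Δ ∈ unfoldDiamond α φ, Δ ⊆ Y)

/-- Single negation. -/
def snegg : Formula → Formula
  | .neg φ => φ
  | φ => .neg φ

mutual
/-- Subformulas of a formula. -/
def subfF : Formula → Set Formula
  | .bot => {.bot}
  | .atom p => {.atom p}
  | .and φ ψ => {.and φ ψ} ∪ subfF φ ∪ subfF ψ
  | .neg φ => {.neg φ} ∪ subfF φ
  | .box α φ => {.box α φ} ∪ subfP α ∪ subfF φ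
/-- Formulas occurring in a program. -/
def subfP : Program → Set Formula
  | .atom _ => ∅
  | .test τ => subfF τ
  | .union α β => subfP α ∪ subfP β
  | .comp α β => subfP α ∪ subfP β
  | .star α => subfP α
end

/-- Fischer-Ladner closed sets. -/
def FLclosed (S : Set Formula) : Prop :=
  (∀ φ ∈ S, snegg φ ∈ S) ∧
  (∀ φ ∈ S, subfF φ ⊆ S) ∧
  (∀ α β φ, Formula.box (.union α β) φ ∈ S → Formula.box α φ ∈ S ∧ Formula.box β φ ∈ S) ∧
  (∀ α β φ, Formula.box (.comp α β) φ ∈ S → Formula.box α (.box β φ) ∈ S) ∧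
  (∀ α φ, Formula.box (.star α) φ ∈ S → Formula.box α (.box (.star α) φ) ∈ S)

/-- Fischer-Ladner closure: the smallest Fischer-Ladner closed superset. -/
def FL (X : Set Formula) : Set Formula := {φ | ∀ S, X ⊆ S → FLclosed S → φ ∈ S}

mutual
def lenF : Formula → ℕ
  | .bot => 1
  | .atom _ => 1
  | .and φ ψ => 1 + lenF φ + lenF ψ
  | .neg φ => 1 + lenF φ
  | .box α φ => 1 + lenP α + lenF φ
/-- Length (size) of a program. -/
def lenP : Program → ℕ
  | .atom _ => 1
  | .test τ => 1 + lenF τ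
  | .union α β => 1 + lenP α + lenP β
  | .comp α β => 1 + lenP α + lenP β
  | .star α => 1 + lenP α
end

/-- Sum of distances along a list of states (consecutive pairs). -/
noncomputable def listSum {W : Type} (d : W → W → ℕ∞) : List W → ℕ∞
  | [] => 0
  | [_] => 0
  | a :: b :: rest => d a b + listSum d (b :: rest)

open Classical in
/-- The α-distance between states. -/
noncomputable def distance {W : Type} (M : KripkeModel W) : Program → W → W → ℕ∞
  | .atom a, v, w => if M.rel a v w then 1 else ⊤
  | .test τ, v, w => if v = w ∧ evaluate M v τ then 0 else ⊤
  | .union α β, v, w => min (distance M α v w) (distance M β v w)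
  | .comp α β, v, w => ⨅ u, distance M α v u + distance M β u w
  | .star α, v, w =>
      ⨅ (l : List W) (_ : l.head? = some v ∧ l.getLast? = some w),
        listSum (fun x y => distance M α x y) l

open Classical in
/-- Distance along a list of programs. -/
noncomputable def distanceSeq {W : Type} (M : KripkeModel W) : List Program → W → W → ℕ∞
  | [], v, w => if v = w then 0 else ⊤
  | α :: δ, v, w => ⨅ u, distance M α v u + distanceSeq M δ u w

/-- The relation Q_α on a type of "states" S carrying formula membership `mem`. -/
def Qprog {S : Type} (mem : Formula → S → Prop) (R : ℕ → S → S → Prop) : Program → S → S → Prop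
  | .atom a => R a
  | .test τ => fun X Y => X = Y ∧ mem τ X
  | .union α β => fun X Y => Qprog mem R α X Y ∨ Qprog mem R β X Y
  | .comp α β => fun X Y => ∃ U, Qprog mem R α X U ∧ Qprog mem R β U Y
  | .star α => Relation.ReflTransGen (fun X Y => Qprog mem R α X Y)

/-- Q along a list of programs, with Id_W (restricted identity) for the empty list. -/
def Qseq {S : Type} (mem : Formula → S → Prop) (R : ℕ → S → S → Prop) (Wset : Set S) :
    List Program → S → S → Prop
  | [] => fun Y Z => Y = Z ∧ Y ∈ Wset
  | α :: δ => fun Y Z => ∃ U, Qprog mem R α Y U ∧ Qseq mem R Wset δ U Z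

/-- A model graph: a Kripke model whose states are locally consistent saturated sets. -/
structure ModelGraph (Wset : Set (Set Formula)) : Type where
  R : ℕ → ↥Wset → ↥Wset → Prop
  saturated : ∀ X : ↥Wset, Saturated X.val
  noBot : ∀ X : ↥Wset, Formula.bot ∉ X.val
  consistent : ∀ (X : ↥Wset) (p : ℕ),
    Formula.atom p ∈ X.val → Formula.neg (Formula.atom p) ∉ X.val
  boxCond : ∀ (X Y : ↥Wset) (a : ℕ) (φ : Formula),
    R a X Y → Formula.box (.atom a) φ ∈ X.val → φ ∈ Y.val
  diaCond : ∀ (X : ↥Wset) (α : Program) (φ : Formula),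
    Formula.neg (.box α φ) ∈ X.val →
      ∃ Y : ↥Wset, Qprog (fun τ Z => τ ∈ Z.val) R α X Y ∧ Formula.neg φ ∈ Y.val

/-- The Kripke model of a model graph; valuation: p holds at X iff p ∈ X. -/
def mgModel {Wset : Set (Set Formula)} (G : ModelGraph Wset) : KripkeModel ↥Wset :=
  ⟨G.R, fun X p => Formula.atom p ∈ X.val⟩

section Dev
variable {W : Type} (M : KripkeModel W)

lemma enat_attained {ι : Type*} [Nonempty ι] (f : ι → ℕ∞) : ∃ i, f i = ⨅ j, f j := by
  by_cases h : (⨅ j, f j) = ⊤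
  · obtain ⟨i⟩ := ‹Nonempty ι›
    exact ⟨i, by rw [h]; exact (iInf_eq_top.mp h i)⟩
  · obtain ⟨n, hn⟩ : ∃ n : ℕ, (⨅ j, f j) = n := by
      cases hm : (⨅ j, f j) with
      | top => exact absurd hm h
      | coe n => exact ⟨n, rfl⟩
    have hlt : (⨅ j, f j) < (n : ℕ∞) + 1 := by
      rw [hn]; exact_mod_cast Nat.lt_succ_self n
    obtain ⟨i, hi⟩ := iInf_lt_iff.mp hlt
    refine ⟨i, le_antisymm ?_ (iInf_le f i)⟩
    rw [hn]
    exact (ENat.lt_add_one_iff (by simp)).mp hi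

lemma dSeq_single (γ : Program) (v w : W) :
    distanceSeq M [γ] v w = distance M γ v w := by
  simp only [distanceSeq]
  apply le_antisymm
  · refine iInf_le_of_le w ?_
    simp [distanceSeq]
  · refine le_iInf fun u => ?_
    by_cases h : u = w
    · subst h; simp [distanceSeq]
    · simp [distanceSeq, h]

lemma dSeq_append_le (l1 l2 : List Program) (v u w : W) :
    distanceSeq M (l1 ++ l2) v w ≤ distanceSeq M l1 v u + distanceSeq M l2 u w := by
  induction l1 generalizing v with
  | nil =>
    by_cases h : v = u
    · subst h; simp [distanceSeq]
    · simp [distanceSeq, h]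
  | cons γ rest ih =>
    simp only [List.cons_append, distanceSeq]
    by_cases htop : (⨅ x, distance M γ v x + distanceSeq M rest x u) = ⊤
    · rw [htop]; simp
    · have : Nonempty W := ⟨v⟩
      obtain ⟨x, hx⟩ := enat_attained (fun x => distance M γ v x + distanceSeq M rest x u)
      rw [← hx]
      calc (⨅ y, distance M γ v y + distanceSeq M (rest ++ l2) y w)
          ≤ distance M γ v x + distanceSeq M (rest ++ l2) x w := iInf_le _ x
        _ ≤ distance M γ v x + (distanceSeq M rest x u + distanceSeq M l2 u w) := by
            gcongr; exact ih x
        _ = distance M γ v x + distanceSeq M rest x u + distanceSeq M l2 u w := by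
            rw [add_assoc]

lemma dSeq_append_split (l1 l2 : List Program) (v w : W) :
    ∃ u, distanceSeq M l1 v u + distanceSeq M l2 u w ≤ distanceSeq M (l1 ++ l2) v w := by
  induction l1 generalizing v with
  | nil => exact ⟨v, by simp [distanceSeq]⟩
  | cons γ rest ih =>
    by_cases htop : distanceSeq M (γ :: rest ++ l2) v w = ⊤
    · exact ⟨w, by rw [htop]; exact le_top⟩
    · have : Nonempty W := ⟨v⟩
      simp only [List.cons_append, distanceSeq] at htop ⊢
      obtain ⟨x, hx⟩ := enat_attained (fun x => distance M γ v x + distanceSeq M (rest ++ l2) x w)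
      obtain ⟨u, hu⟩ := ih x
      refine ⟨u, ?_⟩
      calc distanceSeq M (γ :: rest) v u + distanceSeq M l2 u w
          ≤ (distance M γ v x + distanceSeq M rest x u) + distanceSeq M l2 u w := by
            gcongr; exact iInf_le _ x
        _ = distance M γ v x + (distanceSeq M rest x u + distanceSeq M l2 u w) := add_assoc _ _ _
        _ ≤ distance M γ v x + distanceSeq M (rest ++ l2) x w := by gcongr
        _ = ⨅ x, distance M γ v x + distanceSeq M (rest ++ l2) x w := hx

lemma dist_star_le (α : Program) (l : List W) (v w : W)
    (h1 : l.head? = some v) (h2 : l.getLast? = some w) :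
    distance M (.star α) v w ≤ listSum (fun x y => distance M α x y) l := by
  simp only [distance]
  exact iInf_le_of_le l (iInf_le_of_le ⟨h1, h2⟩ le_rfl)
lemma chain_of_listSum (α : Program) (w : W)
    (hIH : ∀ x y : W, distance M α x y ≠ ⊤ → relate M α x y) :
    ∀ l : List W, ∀ x, l.head? = some x → l.getLast? = some w →
      listSum (fun a b => distance M α a b) l ≠ ⊤ →
      Relation.ReflTransGen (fun a b => relate M α a b) x w := by
  intro l
  induction l with
  | nil => intro x h1; simp at h1
  | cons a rest ih =>
    intro x h1 h2 h3
    simp only [List.head?_cons, Option.some.injEq] at h1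
    subst h1
    cases rest with
    | nil =>
      simp only [List.getLast?_singleton, Option.some.injEq] at h2
      subst h2; exact Relation.ReflTransGen.refl
    | cons b rest2 =>
      simp only [listSum] at h3
      have hab : distance M α a b ≠ ⊤ := fun h => h3 (by simp [h])
      have hrest : listSum (fun a b => distance M α a b) (b :: rest2) ≠ ⊤ :=
        fun h => h3 (by simp [h])
      have h2' : (b :: rest2).getLast? = some w := by
        rwa [List.getLast?_cons_cons] at h2
      exact Relation.ReflTransGen.head (hIH a b hab) (ih b rfl h2' hrest)

lemma listSum_of_chain (α : Program) (v w : W)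
    (hIH : ∀ x y : W, relate M α x y → distance M α x y ≠ ⊤)
    (h : Relation.ReflTransGen (fun a b => relate M α a b) v w) :
    ∃ l : List W, l.head? = some v ∧ l.getLast? = some w ∧
      listSum (fun a b => distance M α a b) l ≠ ⊤ := by
  induction h using Relation.ReflTransGen.head_induction_on with
  | refl => exact ⟨[w], rfl, rfl, by simp [listSum]⟩
  | head hab _ ih =>
    rename_i a b _
    obtain ⟨l, h1, h2, h3⟩ := ih
    match l, h1 with
    | c :: rest, h1 =>
      simp only [List.head?_cons, Option.some.injEq] at h1
      subst h1
      refine ⟨a :: c :: rest, rfl, by rwa [List.getLast?_cons_cons], ?_⟩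
      simp only [listSum]
      intro htop
      rcases WithTop.add_eq_top.mp htop with h | h
      · exact hIH a c hab h
      · exact h3 h

lemma dist_ne_top_iff : ∀ (α : Program) (v w : W),
    distance M α v w ≠ ⊤ ↔ relate M α v w
  | .atom a, v, w => by
    simp only [distance, relate]
    by_cases h : M.rel a v w <;> simp [h]
  | .test τ, v, w => by
    simp only [distance, relate]
    by_cases h : v = w ∧ evaluate M v τ
    · simp only [if_pos h]
      obtain ⟨h1, h2⟩ := h
      subst h1
      simp [h2]
    · simp only [if_neg h]
      constructor
      · simp
      · rintro ⟨h1, h2⟩; subst h1; exact absurd ⟨rfl, h2⟩ h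
  | .union α β, v, w => by
    have ihα := dist_ne_top_iff α v w
    have ihβ := dist_ne_top_iff β v w
    simp only [distance, relate, ne_eq, min_eq_top, not_and]
    rw [← ihα, ← ihβ]
    tauto
  | .comp α β, v, w => by
    simp only [distance, relate, ne_eq, iInf_eq_top, not_forall]
    constructor
    · rintro ⟨u, hu⟩
      have h1 : distance M α v u ≠ ⊤ := fun ht => hu (by rw [ht]; simp)
      have h2 : distance M β u w ≠ ⊤ := fun ht => hu (by rw [ht]; simp)
      exact ⟨u, (dist_ne_top_iff α v u).mp h1, (dist_ne_top_iff β u w).mp h2⟩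
    · rintro ⟨u, h1, h2⟩
      refine ⟨u, fun ht => ?_⟩
      rcases WithTop.add_eq_top.mp ht with h | h
      · exact (dist_ne_top_iff α v u).mpr h1 h
      · exact (dist_ne_top_iff β u w).mpr h2 h
  | .star α, v, w => by
    simp only [relate]
    constructor
    · intro h
      simp only [distance, ne_eq, iInf_eq_top, not_forall] at h
      obtain ⟨l, hP, hl⟩ := h
      exact chain_of_listSum M α w
        (fun x y hx => (dist_ne_top_iff α x y).mp hx) l v hP.1 hP.2 hl
    · intro h
      obtain ⟨l, h1, h2, h3⟩ := listSum_of_chain M α v w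
        (fun x y hx => (dist_ne_top_iff α x y).mpr hx) h
      exact fun htop => h3 (eq_top_iff.mpr (htop ▸ dist_star_le M α l v w h1 h2))
lemma dist_star_attained (α : Program) (u w : W)
    (h : distance M (.star α) u w ≠ ⊤) :
    ∃ l : List W, l.head? = some u ∧ l.getLast? = some w ∧
      listSum (fun x y => distance M α x y) l = distance M (.star α) u w := by
  have hsub : distance M (.star α) u w
      = ⨅ x : {l : List W // l.head? = some u ∧ l.getLast? = some w},
          listSum (fun a b => distance M α a b) x.val := by
    simp only [distance]
    exact iInf_subtype'
  have hne : Nonempty {l : List W // l.head? = some u ∧ l.getLast? = some w} := by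
    by_contra hc
    apply h
    rw [hsub]
    exact iInf_eq_top.mpr (fun x => absurd ⟨x⟩ hc)
  obtain ⟨⟨l, hl⟩, hval⟩ :=
    enat_attained (fun x : {l : List W // l.head? = some u ∧ l.getLast? = some w} =>
      listSum (fun a b => distance M α a b) x.val)
  exact ⟨l, hl.1, hl.2, by rw [hval, ← hsub]⟩

lemma dist_star_step (α : Program) (v u w : W) :
    distance M (.star α) v w ≤ distance M α v u + distance M (.star α) u w := by
  by_cases h : distance M (.star α) u w = ⊤
  · rw [h, add_top]; exact le_top
  · obtain ⟨l, h1, h2, h3⟩ := dist_star_attained M α u w h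
    cases l with
    | nil => simp at h1
    | cons a rest =>
      have ha : u = a := by simpa using h1.symm
      subst ha
      have hle := dist_star_le M α (v :: u :: rest) v w rfl
        (by rwa [List.getLast?_cons_cons])
      calc distance M (.star α) v w
          ≤ listSum (fun x y => distance M α x y) (v :: u :: rest) := hle
        _ = distance M α v u + listSum (fun x y => distance M α x y) (u :: rest) := rfl
        _ = distance M α v u + distance M (.star α) u w := by rw [h3]

lemma dist_le_dSeq : ∀ (α : Program) (v w : W) (p : Set Formula × List Program),
    p ∈ Hfun α → (∀ τ ∈ p.1, evaluate M v τ) →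
    distance M α v w ≤ distanceSeq M p.2 v w
  | .atom a, v, w, p, hp, _ => by
    simp only [Hfun, Set.mem_singleton_iff] at hp
    subst hp
    rw [dSeq_single]
  | .test τ, v, w, p, hp, htests => by
    simp only [Hfun, Set.mem_singleton_iff] at hp
    subst hp
    simp only [distanceSeq, distance]
    by_cases h : v = w
    · subst h
      have hev : evaluate M v τ := htests τ rfl
      simp [hev]
    · simp [h]
  | .union α β, v, w, p, hp, htests => by
    simp only [Hfun, Set.mem_union] at hp
    rcases hp with h | h
    · calc distance M (.union α β) v w ≤ distance M α v w := min_le_left _ _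
        _ ≤ _ := dist_le_dSeq α v w p h htests
    · calc distance M (.union α β) v w ≤ distance M β v w := min_le_right _ _
        _ ≤ _ := dist_le_dSeq β v w p h htests
  | .comp α β, v, w, p, hp, htests => by
    simp only [Hfun, Set.mem_setOf_eq] at hp
    rcases hp with ⟨X, δ, hXδ, hne, rfl⟩ | ⟨X, Y, δ, hX, hY, rfl⟩
    · obtain ⟨u, hu⟩ := dSeq_append_split M δ [β] v w
      rw [dSeq_single] at hu
      have h1 : distance M α v u ≤ distanceSeq M δ v u :=
        dist_le_dSeq α v u (X, δ) hXδ htests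
      have h2 : distance M (.comp α β) v w ≤ distance M α v u + distance M β u w :=
        iInf_le _ u
      exact h2.trans ((add_le_add h1 le_rfl).trans hu)
    · have h1 : distance M α v v ≤ distanceSeq M [] v v :=
        dist_le_dSeq α v v (X, []) hX (fun τ ht => htests τ (Set.mem_union_left _ ht))
      have h2 : distance M β v w ≤ distanceSeq M δ v w :=
        dist_le_dSeq β v w (Y, δ) hY (fun τ ht => htests τ (Set.mem_union_right _ ht))
      simp only [distanceSeq, if_pos rfl] at h1
      calc distance M (.comp α β) v w
          ≤ distance M α v v + distance M β v w := iInf_le _ v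
        _ ≤ 0 + distanceSeq M δ v w := add_le_add h1 h2
        _ = distanceSeq M δ v w := zero_add _
  | .star α, v, w, p, hp, htests => by
    simp only [Hfun, Set.mem_insert_iff, Set.mem_setOf_eq] at hp
    rcases hp with rfl | ⟨X, δ, hXδ, hne, rfl⟩
    · simp only [distanceSeq]
      by_cases h : v = w
      · subst h
        simp only [if_pos rfl]
        have := dist_star_le M α [v] v v rfl rfl
        simpa [listSum] using this
      · simp [h]
    · obtain ⟨u, hu⟩ := dSeq_append_split M δ [.star α] v w
      rw [dSeq_single] at hu
      have h1 : distance M α v u ≤ distanceSeq M δ v u :=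
        dist_le_dSeq α v u (X, δ) hXδ htests
      have h2 := dist_star_step M α v u w
      exact h2.trans ((add_le_add h1 le_rfl).trans hu)
lemma star_pair (α : Program)
    (hIH : ∀ x y : W, relate M α x y → ∃ p ∈ Hfun α,
      (∀ τ ∈ p.1, evaluate M x τ) ∧ distanceSeq M p.2 x y ≤ distance M α x y) :
    ∀ (l : List W) (v w : W), l.head? = some v → l.getLast? = some w →
      listSum (fun a b => distance M α a b) l ≠ ⊤ →
      ∃ p ∈ Hfun (.star α), (∀ τ ∈ p.1, evaluate M v τ) ∧
        distanceSeq M p.2 v w ≤ listSum (fun a b => distance M α a b) l := by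
  intro l
  induction l with
  | nil => intro v w h1; simp at h1
  | cons a rest ih =>
    intro v w h1 h2 h3
    have ha : a = v := by simpa using h1
    subst ha
    cases rest with
    | nil =>
      have hw : a = w := by simpa using h2
      subst hw
      exact ⟨(∅, []), Set.mem_insert _ _, by simp, by simp [distanceSeq]⟩
    | cons b rest2 =>
      have hab : distance M α a b ≠ ⊤ := by
        intro ht
        exact h3 (by simp only [listSum, ht, top_add])
      have hrest : listSum (fun x y => distance M α x y) (b :: rest2) ≠ ⊤ := by
        intro ht
        exact h3 (by simp only [listSum, ht, add_top])
      have h2' : (b :: rest2).getLast? = some w := by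
        rwa [List.getLast?_cons_cons] at h2
      obtain ⟨⟨X, δ⟩, hXδ, htests, hle⟩ := hIH a b ((dist_ne_top_iff M α a b).mp hab)
      by_cases hδ : δ = []
      · subst hδ
        have hba : a = b := by
          by_contra hne
          rw [show distanceSeq M [] a b = ⊤ by simp [distanceSeq, hne]] at hle
          exact hab (top_le_iff.mp hle)
        subst hba
        obtain ⟨p, hp, ht, hle2⟩ := ih _ w rfl h2' hrest
        refine ⟨p, hp, ht, hle2.trans ?_⟩
        exact le_add_self
      · refine ⟨(X, δ ++ [.star α]), Or.inr ⟨X, δ, hXδ, hδ, rfl⟩, htests, ?_⟩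
        calc distanceSeq M (δ ++ [.star α]) a w
            ≤ distanceSeq M δ a b + distanceSeq M [.star α] b w :=
              dSeq_append_le M δ [.star α] a b w
          _ = distanceSeq M δ a b + distance M (.star α) b w := by rw [dSeq_single]
          _ ≤ distance M α a b + listSum (fun x y => distance M α x y) (b :: rest2) := by
              gcongr
              exact dist_star_le M α (b :: rest2) b w rfl h2'
          _ = listSum (fun x y => distance M α x y) (a :: b :: rest2) := rfl

lemma Hfun_realize : ∀ (α : Program) (v w : W), relate M α v w →
    ∃ p ∈ Hfun α, (∀ τ ∈ p.1, evaluate M v τ) ∧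
      distanceSeq M p.2 v w ≤ distance M α v w
  | .atom a, v, w, h =>
    ⟨(∅, [.atom a]), rfl, by simp, by rw [dSeq_single]⟩
  | .test τ, v, w, h => by
    obtain ⟨rfl, hev⟩ : v = w ∧ evaluate M v τ := h
    exact ⟨({τ}, []), rfl, by simpa using hev, by simp [distanceSeq]⟩
  | .union α β, v, w, h => by
    by_cases htop : distance M (.union α β) v w = ⊤
    · rcases h with h | h
      · obtain ⟨p, hp, ht, _⟩ := Hfun_realize α v w h
        exact ⟨p, Set.mem_union_left _ hp, ht, htop ▸ le_top⟩
      · obtain ⟨p, hp, ht, _⟩ := Hfun_realize β v w h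
        exact ⟨p, Set.mem_union_right _ hp, ht, htop ▸ le_top⟩
    · have hmin : distance M (.union α β) v w
          = min (distance M α v w) (distance M β v w) := rfl
      rcases min_cases (distance M α v w) (distance M β v w) with ⟨heq, _⟩ | ⟨heq, _⟩
      · have hα : distance M α v w ≠ ⊤ := by
          rw [hmin, heq] at htop; exact htop
        obtain ⟨p, hp, ht, hle⟩ := Hfun_realize α v w ((dist_ne_top_iff M α v w).mp hα)
        exact ⟨p, Set.mem_union_left _ hp, ht, by rw [hmin, heq]; exact hle⟩
      · have hβ : distance M β v w ≠ ⊤ := by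
          rw [hmin, heq] at htop; exact htop
        obtain ⟨p, hp, ht, hle⟩ := Hfun_realize β v w ((dist_ne_top_iff M β v w).mp hβ)
        exact ⟨p, Set.mem_union_right _ hp, ht, by rw [hmin, heq]; exact hle⟩
  | .comp α β, v, w, h => by
    obtain ⟨u₀, h1, h2⟩ := h
    have : Nonempty W := ⟨v⟩
    obtain ⟨u, hu⟩ := enat_attained (fun u => distance M α v u + distance M β u w)
    have hcomp : distance M (.comp α β) v w = distance M α v u + distance M β u w :=
      hu.symm
    have hfin : distance M α v u + distance M β u w ≠ ⊤ := by
      rw [hu]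
      intro hc
      have h0 := iInf_eq_top.mp hc u₀
      rcases WithTop.add_eq_top.mp h0 with ht | ht
      · exact (dist_ne_top_iff M α v u₀).mpr h1 ht
      · exact (dist_ne_top_iff M β u₀ w).mpr h2 ht
    have hαfin : distance M α v u ≠ ⊤ := fun ht => hfin (by rw [ht, top_add])
    have hβfin : distance M β u w ≠ ⊤ := fun ht => hfin (by rw [ht, add_top])
    obtain ⟨⟨X, δ⟩, hX, htX, hleX⟩ :=
      Hfun_realize α v u ((dist_ne_top_iff M α v u).mp hαfin)
    by_cases hδ : δ = []
    · subst hδ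
      have huv : v = u := by
        by_contra hne
        rw [show distanceSeq M [] v u = ⊤ by simp [distanceSeq, hne]] at hleX
        exact hαfin (top_le_iff.mp hleX)
      subst huv
      obtain ⟨⟨Y, δ'⟩, hY, htY, hleY⟩ :=
        Hfun_realize β v w ((dist_ne_top_iff M β v w).mp hβfin)
      refine ⟨(X ∪ Y, δ'), Or.inr ⟨X, Y, δ', hX, hY, rfl⟩, ?_, ?_⟩
      · rintro τ (hτ | hτ)
        · exact htX τ hτ
        · exact htY τ hτ
      · rw [hcomp]
        exact hleY.trans le_add_self
    · refine ⟨(X, δ ++ [β]), Or.inl ⟨X, δ, hX, hδ, rfl⟩, htX, ?_⟩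
      rw [hcomp]
      calc distanceSeq M (δ ++ [β]) v w
          ≤ distanceSeq M δ v u + distanceSeq M [β] u w := dSeq_append_le M δ [β] v u w
        _ = distanceSeq M δ v u + distance M β u w := by rw [dSeq_single]
        _ ≤ distance M α v u + distance M β u w := by gcongr
  | .star α, v, w, h => by
    by_cases hvw : v = w
    · subst hvw
      exact ⟨(∅, []), Set.mem_insert _ _, by simp, by simp [distanceSeq]⟩
    · have hfin : distance M (.star α) v w ≠ ⊤ :=
        (dist_ne_top_iff M (.star α) v w).mpr h
      obtain ⟨l, h1, h2, h3⟩ := dist_star_attained M α v w hfin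
      obtain ⟨p, hp, ht, hle⟩ := star_pair M α
        (fun x y hr => Hfun_realize α x y hr) l v w h1 h2 (by rw [h3]; exact hfin)
      exact ⟨p, hp, ht, hle.trans (le_of_eq h3)⟩


end Dev

/-- Minimal-distance realization via H. -/
theorem distance_realized {W : Type} (M : KripkeModel W) (α : Program) (v w : W)
    (h : relate M α v w) :
    ∃ p ∈ Hfun α, (∀ τ ∈ p.1, evaluate M v τ) ∧
      distanceSeq M p.2 v w = distance M α v w := by
  obtain ⟨p, hp, ht, hle⟩ := Hfun_realize M α v w h
  exact ⟨p, hp, ht, le_antisymm hle (dist_le_dSeq M α v w p hp ht)⟩
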